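/- Let p be a prime with p ≡ 1 (mod 5) and set t = (p−1)/5. Let T be a generator of the group of characters on 𝔽_p, and let a, b, c be integers such that a+c ≢ 0 (mod 5) and b+c ≢ 0 (mod 5). Then Σ_{e=0}^{p−2} G_{−e+at}·G_{−e+bt}·G_{e+ct}·G_{e−(a+b+c)t} = −p(p−1). -/

import Mathlib

open Finset

/-- The standard additive character `θ(a) = e^{2πia/p}` on `𝔽_p`. -/
noncomputable def theta (p : ℕ) (a : ZMod p) : ℂ :=
  Complex.exp (2 * Real.pi * Complex.I * (ZMod.val a : ℂ) / (p : ℂ))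

/-- The Gauss sum `G(χ) = ∑_{x ∈ 𝔽_p} χ(x) θ(x)`. -/
noncomputable def gaussS (p : ℕ) [NeZero p] (χ : MulChar (ZMod p) ℂ) : ℂ :=
  ∑ x : ZMod p, χ x * theta p x

/-- The generalized Jacobi sum `J(χ₁,χ₂,χ₃) = ∑_{t₁+t₂+t₃=1} χ₁(t₁)χ₂(t₂)χ₃(t₃)`. -/
noncomputable def jacobi3 (p : ℕ) [NeZero p] (χ₁ χ₂ χ₃ : MulChar (ZMod p) ℂ) : ℂ :=
  ∑ v ∈ Finset.univ.filter (fun v : ZMod p × ZMod p × ZMod p => v.1 + v.2.1 + v.2.2 = 1),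
    χ₁ v.1 * χ₂ v.2.1 * χ₃ v.2.2

section aux
variable {p : ℕ} [Fact p.Prime]

lemma mulChar_zpow_coe (χ : MulChar (ZMod p) ℂ) (m : ℤ) (x : (ZMod p)ˣ) :
    (χ ^ m) (x : ZMod p) = (χ (x : ZMod p)) ^ m := by
  cases m with
  | ofNat n => simpa using MulChar.pow_apply_coe χ n x
  | negSucc n =>
      rw [zpow_negSucc, zpow_negSucc, MulChar.inv_apply_eq_inv', MulChar.pow_apply_coe]

lemma mulChar_map_unit_inv (χ : MulChar (ZMod p) ℂ) (x : (ZMod p)ˣ) :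
    χ ((x⁻¹ : (ZMod p)ˣ) : ZMod p) = (χ (x : ZMod p))⁻¹ := by
  have h : χ ((x⁻¹ : (ZMod p)ˣ) : ZMod p) * χ (x : ZMod p) = 1 := by
    rw [← map_mul, Units.inv_mul, MulChar.map_one]
  exact eq_inv_of_mul_eq_one_left h

lemma mulChar_ne_zero (χ : MulChar (ZMod p) ℂ) (x : (ZMod p)ˣ) :
    χ (x : ZMod p) ≠ 0 := by
  intro h
  have h2 : χ ((x⁻¹ : (ZMod p)ˣ) : ZMod p) * χ (x : ZMod p) = 1 := by
    rw [← map_mul, Units.inv_mul, MulChar.map_one]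
  rw [h, mul_zero] at h2
  exact zero_ne_one h2

end aux

/-- Corollary 2.12 of McCarthy. -/
theorem gauss_t_sum (p : ℕ) [Fact p.Prime] (hp : p % 5 = 1)
    (t : ℕ) (ht : t = (p - 1) / 5)
    (T : MulChar (ZMod p) ℂ) (hT : ∀ χ : MulChar (ZMod p) ℂ, ∃ n : ℕ, χ = T ^ n)
    (a b c : ℤ) (hac : ¬ (5 : ℤ) ∣ (a + c)) (hbc : ¬ (5 : ℤ) ∣ (b + c)) :
    ∑ e ∈ Finset.range (p - 1),
      gaussS p (T ^ (-(e : ℤ) + a * t)) * gaussS p (T ^ (-(e : ℤ) + b * t)) *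
      gaussS p (T ^ ((e : ℤ) + c * t)) * gaussS p (T ^ ((e : ℤ) - (a + b + c) * t)) =
    -(p : ℂ) * ((p : ℂ) - 1) := by
  classical
  have hprime : p.Prime := Fact.out
  have hp1 : 1 < p := hprime.one_lt
  have hp2 : p ≠ 2 := by omega
  have hodd : p % 2 = 1 := Nat.odd_iff.mp (hprime.odd_of_ne_two hp2)
  have h5t : p - 1 = 5 * t := by omega
  have hteven : t % 2 = 0 := by omega
  have ht0 : (t : ℤ) ≠ 0 := by
    have : t ≠ 0 := by omega
    exact_mod_cast this
  -- the additive character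
  have hζ : IsPrimitiveRoot (Complex.exp (2 * Real.pi * Complex.I / p)) p :=
    Complex.isPrimitiveRoot_exp p (by omega)
  set ψ : AddChar (ZMod p) ℂ :=
    AddChar.zmodChar p ((IsPrimitiveRoot.iff_def _ p).mp hζ).left with hψdef
  have hψprim : ψ.IsPrimitive := AddChar.zmodChar_primitive_of_primitive_root p hζ
  have hgauss : ∀ χ : MulChar (ZMod p) ℂ, gaussS p χ = gaussSum χ ψ := by
    intro χ
    unfold gaussS gaussSum
    refine Finset.sum_congr rfl fun x _ => ?_
    congr 1
    rw [hψdef, AddChar.zmodChar_apply, theta, ← Complex.exp_nat_mul]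
    ring_nf
  -- faithfulness of T
  haveI : NeZero ((Monoid.exponent (ZMod p)ˣ : ℂ)) := by
    refine ⟨?_⟩
    exact_mod_cast Monoid.exponent_ne_zero_of_finite
  have hfaith : ∀ x : (ZMod p)ˣ, T (x : ZMod p) = 1 → x = 1 := by
    intro x hx
    by_contra hne
    obtain ⟨χ, hχ⟩ := MulChar.exists_apply_ne_one_of_hasEnoughRootsOfUnity (ZMod p) ℂ
      (a := (x : ZMod p)) (fun h => hne (Units.ext h))
    obtain ⟨n, rfl⟩ := hT χ
    rw [MulChar.pow_apply_coe, hx, one_pow] at hχ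
    exact hχ rfl
  have hcard : Fintype.card (ZMod p)ˣ = p - 1 := ZMod.card_units p
  -- orthogonality
  have horth : ∀ x : (ZMod p)ˣ, ∑ e ∈ range (p-1), (T (x : ZMod p))^e
      = if x = 1 then ((p : ℂ) - 1) else 0 := by
    intro x
    by_cases hx : x = 1
    · subst hx
      simp only [Units.val_one, MulChar.map_one, one_pow, sum_const, card_range, nsmul_eq_mul,
        mul_one, if_true]
      push_cast [Nat.cast_sub hp1.le]
      ring
    · rw [if_neg hx]
      have hT1 : T (x : ZMod p) ≠ 1 := fun h => hx (hfaith x h)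
      rw [geom_sum_eq hT1]
      have : (T (x : ZMod p)) ^ (p - 1) = 1 := by
        rw [← map_pow, ← Units.val_pow_eq_pow_val, ← hcard,
          pow_card_eq_one, Units.val_one, MulChar.map_one]
      rw [this, sub_self, zero_div]
  -- order of T
  have hTord : T ^ (p - 1) = 1 := by
    apply MulChar.ext
    intro a
    rw [MulChar.pow_apply_coe, ← map_pow, ← Units.val_pow_eq_pow_val, ← hcard,
      pow_card_eq_one, Units.val_one, MulChar.map_one, MulChar.one_apply_coe]
  obtain ⟨g, hg⟩ := IsCyclic.exists_generator (α := (ZMod p)ˣ)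
  have hgord : orderOf g = p - 1 := by
    rw [orderOf_eq_card_of_forall_mem_zpowers hg, Nat.card_eq_fintype_card, hcard]
  have hord : ∀ k : ℤ, T ^ k = 1 → ((p - 1 : ℕ) : ℤ) ∣ k := by
    intro k hk
    have hu : (T (g : ZMod p)) ^ k = 1 := by
      rw [← mulChar_zpow_coe, hk, MulChar.one_apply_coe]
    set r : ℤ := k % ((p-1 : ℕ) : ℤ) with hr
    have hrnn : 0 ≤ r := Int.emod_nonneg k (by exact_mod_cast (by omega : (p-1:ℕ) ≠ 0))
    have hrlt : r < ((p-1 : ℕ) : ℤ) :=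
      Int.emod_lt_of_pos k (by exact_mod_cast (by omega : 0 < p - 1))
    have hupow : (T (g : ZMod p)) ^ ((p - 1 : ℕ) : ℤ) = 1 := by
      rw [zpow_natCast, ← map_pow, ← Units.val_pow_eq_pow_val, ← hcard,
        pow_card_eq_one, Units.val_one, MulChar.map_one]
    have hur : (T (g : ZMod p)) ^ r = 1 := by
      have := Int.mul_ediv_add_emod k ((p-1:ℕ):ℤ)
      calc (T (g : ZMod p)) ^ r
          = ((T (g:ZMod p)) ^ ((p-1:ℕ):ℤ)) ^ (k / ((p-1:ℕ):ℤ)) * (T (g:ZMod p)) ^ r := by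
            rw [hupow, one_zpow, one_mul]
        _ = (T (g : ZMod p)) ^ k := by
            rw [← zpow_mul, ← zpow_add₀ (mulChar_ne_zero T g)]
            congr 1
        _ = 1 := hu
    have hrn : (T (g : ZMod p)) ^ r.toNat = 1 := by
      rw [← zpow_natCast, Int.toNat_of_nonneg hrnn]; exact hur
    have hgr : g ^ r.toNat = 1 := by
      apply hfaith
      rw [Units.val_pow_eq_pow_val, map_pow, hrn]
    have hdvd : (p - 1) ∣ r.toNat := hgord ▸ orderOf_dvd_of_pow_eq_one hgr
    have htlt : r.toNat < p - 1 := by omega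
    have htn0 : r.toNat = 0 := Nat.eq_zero_of_dvd_of_lt hdvd htlt
    have hr0 : r = 0 := by omega
    exact Int.dvd_of_emod_eq_zero hr0
  have hnt : ∀ m : ℤ, ¬ (5:ℤ) ∣ m → T ^ (m * (t:ℤ)) ≠ 1 := by
    intro m hm h1
    have h2 := hord _ h1
    apply hm
    have h3 : ((p - 1 : ℕ) : ℤ) = 5 * t := by push_cast [h5t]; ring
    rw [h3] at h2
    exact (mul_dvd_mul_iff_right ht0).mp h2
  -- value at -1
  have hm1 : ∀ m : ℤ, (T ^ (m * (t:ℤ))) (-1 : ZMod p) = 1 := by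
    intro m
    obtain ⟨s, hs⟩ : ∃ s, t = 2*s := ⟨t/2, by omega⟩
    have hu : (-1 : ZMod p) = ((-1 : (ZMod p)ˣ) : ZMod p) := by simp
    rw [hu, mulChar_zpow_coe]
    have hsq : (T (((-1 : (ZMod p)ˣ) : ZMod p)))^(2:ℕ) = 1 := by
      rw [← map_pow]
      norm_num
    rw [show m*(t:ℤ) = ((2:ℕ):ℤ)*(m*s) from by push_cast [hs]; ring, zpow_mul,
      zpow_natCast, hsq, one_zpow]
  -- the inner orthogonality computation
  have key2 : ∀ x y : ZMod p,
      (∑ e ∈ range (p-1),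
        (T ^ (-(e:ℤ) + a * t)) x * (T ^ ((e:ℤ) - (a+b+c) * t)) (1 - x) *
        ((T ^ (-(e:ℤ) + b * t)) y * (T ^ ((e:ℤ) + c * t)) (1 - y)))
      = ((p:ℂ) - 1) *
          (if y = 1 - x then
            (T ^ ((a+c) * (t:ℤ))) x * ((T ^ ((a+c) * (t:ℤ)))⁻¹) (1 - x) else 0) := by
    intro x y
    by_cases hx : IsUnit x
    case neg =>
      have h0 : ∀ m : ℤ, (T ^ m) x = 0 := fun m => MulChar.map_nonunit _ hx
      simp [h0]
    by_cases hx' : IsUnit (1 - x)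
    case neg =>
      have h0 : ∀ m : ℤ, (T ^ m) (1 - x) = 0 := fun m => MulChar.map_nonunit _ hx'
      have h0' : ((T ^ ((a+c) * (t:ℤ)))⁻¹) (1 - x) = 0 := MulChar.map_nonunit _ hx'
      simp [h0, h0']
    by_cases hy : IsUnit y
    case neg =>
      have hne : y ≠ 1 - x := fun h => hy (by rw [h]; exact hx')
      have h0 : ∀ m : ℤ, (T ^ m) y = 0 := fun m => MulChar.map_nonunit _ hy
      simp [h0, hne]
    by_cases hy' : IsUnit (1 - y)
    case neg =>
      have hne : y ≠ 1 - x := fun h => hy' (by rw [h, sub_sub_cancel]; exact hx)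
      have h0 : ∀ m : ℤ, (T ^ m) (1 - y) = 0 := fun m => MulChar.map_nonunit _ hy'
      simp [h0, hne]
    -- all units
    rcases hx with ⟨X, rfl⟩
    rcases hy with ⟨Y, rfl⟩
    obtain ⟨X', hX'⟩ := hx'
    obtain ⟨Y', hY'⟩ := hy'
    rw [← hX', ← hY']
    simp only [MulChar.inv_apply_eq_inv', mulChar_zpow_coe]
    have hu := mulChar_ne_zero T X
    have hu' := mulChar_ne_zero T X'
    have hv := mulChar_ne_zero T Y
    have hv' := mulChar_ne_zero T Y'
    have hw : T (((X'*Y'*(X*Y)⁻¹ : (ZMod p)ˣ) : ZMod p))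
        = T (X' : ZMod p) * T (Y' : ZMod p) * (T (X : ZMod p) * T (Y : ZMod p))⁻¹ := by
      rw [Units.val_mul, Units.val_mul, map_mul, map_mul, mulChar_map_unit_inv,
        Units.val_mul, map_mul]
    have hX0 : (X : ZMod p) ≠ 0 := X.ne_zero
    have hY0 : (Y : ZMod p) ≠ 0 := Y.ne_zero
    have hX'0 : (X' : ZMod p) ≠ 0 := X'.ne_zero
    have hY'0 : (Y' : ZMod p) ≠ 0 := Y'.ne_zero
    have hstep : ∀ e ∈ range (p-1),
        (T (X : ZMod p)) ^ (-(e:ℤ) + a * t) * (T (X' : ZMod p)) ^ ((e:ℤ) - (a+b+c) * t) *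
        ((T (Y : ZMod p)) ^ (-(e:ℤ) + b * t) * (T (Y' : ZMod p)) ^ ((e:ℤ) + c * t))
        = ((T (X : ZMod p))^(a*(t:ℤ)) * (T (X' : ZMod p))^(-((a+b+c)*(t:ℤ))) *
            ((T (Y : ZMod p))^(b*(t:ℤ)) * (T (Y' : ZMod p))^(c*(t:ℤ)))) *
          (T (((X'*Y'*(X*Y)⁻¹ : (ZMod p)ˣ) : ZMod p)))^e := by
      intro e _
      have f1 : ∀ (w : ℂ), w ≠ 0 → ∀ m : ℤ, w ^ (-(e:ℤ) + m) = (w^e)⁻¹ * w^m := by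
        intro w hw m
        rw [zpow_add₀ hw, zpow_neg, zpow_natCast]
      have f2 : ∀ (w : ℂ), w ≠ 0 → ∀ m : ℤ, w ^ ((e:ℤ) + m) = w^e * w^m := by
        intro w hw m
        rw [zpow_add₀ hw, zpow_natCast]
      have f3 : ∀ (w : ℂ), w ≠ 0 → ∀ m : ℤ, w ^ ((e:ℤ) - m) = w^e * w^(-m) := by
        intro w hw m
        rw [sub_eq_add_neg, zpow_add₀ hw, zpow_natCast]
      rw [f1 _ hu, f1 _ hv, f2 _ hv', f3 _ hu', hw]
      field_simp
      rw [div_pow, mul_pow, mul_pow]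
      field_simp
    rw [Finset.sum_congr rfl hstep, ← Finset.mul_sum, horth]
    by_cases hc : (Y : ZMod p) = (X' : ZMod p)
    · -- y = 1 - x
      have hY'X : (Y' : ZMod p) = (X : ZMod p) := by rw [hY', hc, hX']; ring
      have hZ1 : X'*Y'*(X*Y)⁻¹ = 1 := by
        apply Units.ext
        rw [Units.val_mul, Units.val_mul, Units.val_inv_eq_inv_val, Units.val_mul,
          Units.val_one, hY'X, hc]
        field_simp
      rw [if_pos hZ1, if_pos hc]
      have hvy : T (Y : ZMod p) = T (X' : ZMod p) := by rw [hc]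
      have hvy' : T (Y' : ZMod p) = T (X : ZMod p) := by rw [hY'X]
      rw [hvy, hvy']
      have e1 : (T (X : ZMod p))^(a*(t:ℤ)) * (T (X : ZMod p))^(c*(t:ℤ))
          = (T (X : ZMod p))^((a+c)*(t:ℤ)) := by
        rw [← zpow_add₀ hu]; congr 1; ring
      have e2 : (T (X' : ZMod p))^(-((a+b+c)*(t:ℤ))) * (T (X' : ZMod p))^(b*(t:ℤ))
          = ((T (X' : ZMod p))^((a+c)*(t:ℤ)))⁻¹ := by
        rw [← zpow_add₀ hu', ← zpow_neg]; congr 1; ring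
      rw [← e1, ← e2]; ring
    · -- y ≠ 1 - x
      have hZ : X'*Y'*(X*Y)⁻¹ ≠ 1 := by
        intro hZ1
        have hcoe := congrArg (fun u : (ZMod p)ˣ => (u : ZMod p)) hZ1
        simp only [Units.val_mul, Units.val_inv_eq_inv_val, Units.val_one] at hcoe
        rw [hX', hY'] at hcoe
        have h2 : (1 - (X:ZMod p)) * (1 - (Y:ZMod p)) = (X:ZMod p) * (Y:ZMod p) := by
          have hne : ((X:ZMod p) * (Y:ZMod p)) ≠ 0 := mul_ne_zero hX0 hY0
          field_simp at hcoe
          linear_combination hcoe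
        exact hc (by rw [hX']; linear_combination -h2)
      rw [if_neg hZ, if_neg hc]
      ring
  -- per-term reduction to Jacobi sums
  have hχbc : T ^ ((b+c)*(t:ℤ)) ≠ 1 := hnt (b+c) hbc
  have hGG : gaussSum (T ^ ((b+c)*(t:ℤ))) ψ * gaussSum ((T ^ ((b+c)*(t:ℤ)))⁻¹) ψ = (p:ℂ) := by
    have hc1 : ((T ^ ((b+c)*(t:ℤ)))⁻¹) (-1 : ZMod p) = 1 := by
      rw [← zpow_neg, show -((b+c)*(t:ℤ)) = (-(b+c))*(t:ℤ) from by ring]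
      exact hm1 (-(b+c))
    have h1 := gaussSum_mul_gaussSum_eq_card hχbc hψprim
    have h2 := mul_gaussSum_inv_eq_gaussSum ((T ^ ((b+c)*(t:ℤ)))⁻¹) ψ
    rw [hc1, one_mul] at h2
    rw [← h2, h1, ZMod.card]
  have key1 : ∀ e : ℕ,
      gaussSum (T ^ (-(e:ℤ) + a * t)) ψ * gaussSum (T ^ (-(e:ℤ) + b * t)) ψ *
      gaussSum (T ^ ((e:ℤ) + c * t)) ψ * gaussSum (T ^ ((e:ℤ) - (a+b+c) * t)) ψ
      = (p:ℂ) * (jacobiSum (T ^ (-(e:ℤ) + a * t)) (T ^ ((e:ℤ) - (a+b+c) * t)) *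
          jacobiSum (T ^ (-(e:ℤ) + b * t)) (T ^ ((e:ℤ) + c * t))) := by
    intro e
    have h14 : (T ^ (-(e:ℤ) + a * t)) * (T ^ ((e:ℤ) - (a+b+c) * t))
        = (T ^ ((b+c)*(t:ℤ)))⁻¹ := by
      rw [← zpow_add, ← zpow_neg]; congr 1; ring
    have h23 : (T ^ (-(e:ℤ) + b * t)) * (T ^ ((e:ℤ) + c * t)) = T ^ ((b+c)*(t:ℤ)) := by
      rw [← zpow_add]; congr 1; ring
    have j14 := jacobiSum_mul_nontrivial
      (show (T ^ (-(e:ℤ) + a * t)) * (T ^ ((e:ℤ) - (a+b+c) * t)) ≠ 1 from by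
        rw [h14]; exact fun h => hχbc (inv_eq_one.mp h)) ψ
    have j23 := jacobiSum_mul_nontrivial
      (show (T ^ (-(e:ℤ) + b * t)) * (T ^ ((e:ℤ) + c * t)) ≠ 1 from by
        rw [h23]; exact hχbc) ψ
    rw [h14] at j14
    rw [h23] at j23
    calc gaussSum (T ^ (-(e:ℤ) + a * t)) ψ * gaussSum (T ^ (-(e:ℤ) + b * t)) ψ *
        gaussSum (T ^ ((e:ℤ) + c * t)) ψ * gaussSum (T ^ ((e:ℤ) - (a+b+c) * t)) ψ
        = (gaussSum (T ^ (-(e:ℤ) + a * t)) ψ * gaussSum (T ^ ((e:ℤ) - (a+b+c) * t)) ψ) *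
          (gaussSum (T ^ (-(e:ℤ) + b * t)) ψ * gaussSum (T ^ ((e:ℤ) + c * t)) ψ) := by ring
      _ = (gaussSum ((T ^ ((b+c)*(t:ℤ)))⁻¹) ψ *
            jacobiSum (T ^ (-(e:ℤ) + a * t)) (T ^ ((e:ℤ) - (a+b+c) * t))) *
          (gaussSum (T ^ ((b+c)*(t:ℤ))) ψ *
            jacobiSum (T ^ (-(e:ℤ) + b * t)) (T ^ ((e:ℤ) + c * t))) := by rw [j14, j23]
      _ = (gaussSum (T ^ ((b+c)*(t:ℤ))) ψ * gaussSum ((T ^ ((b+c)*(t:ℤ)))⁻¹) ψ) *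
          (jacobiSum (T ^ (-(e:ℤ) + a * t)) (T ^ ((e:ℤ) - (a+b+c) * t)) *
            jacobiSum (T ^ (-(e:ℤ) + b * t)) (T ^ ((e:ℤ) + c * t))) := by ring
      _ = _ := by rw [hGG]
  -- sum of products of Jacobi sums
  have hQ : ∑ e ∈ range (p - 1),
      jacobiSum (T ^ (-(e:ℤ) + a * t)) (T ^ ((e:ℤ) - (a+b+c) * t)) *
        jacobiSum (T ^ (-(e:ℤ) + b * t)) (T ^ ((e:ℤ) + c * t))
      = ((p:ℂ) - 1) * jacobiSum (T ^ ((a+c)*(t:ℤ))) ((T ^ ((a+c)*(t:ℤ)))⁻¹) := by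
    calc ∑ e ∈ range (p - 1),
        jacobiSum (T ^ (-(e:ℤ) + a * t)) (T ^ ((e:ℤ) - (a+b+c) * t)) *
          jacobiSum (T ^ (-(e:ℤ) + b * t)) (T ^ ((e:ℤ) + c * t))
        = ∑ e ∈ range (p - 1), ∑ x : ZMod p, ∑ y : ZMod p,
            (T ^ (-(e:ℤ) + a * t)) x * (T ^ ((e:ℤ) - (a+b+c) * t)) (1 - x) *
            ((T ^ (-(e:ℤ) + b * t)) y * (T ^ ((e:ℤ) + c * t)) (1 - y)) := by
          refine Finset.sum_congr rfl fun e _ => ?_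
          rw [jacobiSum, jacobiSum, Finset.sum_mul_sum]
      _ = ∑ x : ZMod p, ∑ y : ZMod p, ∑ e ∈ range (p - 1),
            (T ^ (-(e:ℤ) + a * t)) x * (T ^ ((e:ℤ) - (a+b+c) * t)) (1 - x) *
            ((T ^ (-(e:ℤ) + b * t)) y * (T ^ ((e:ℤ) + c * t)) (1 - y)) := by
          rw [Finset.sum_comm]
          exact Finset.sum_congr rfl fun x _ => Finset.sum_comm
      _ = ∑ x : ZMod p, ∑ y : ZMod p, ((p:ℂ) - 1) *
            (if y = 1 - x then
              (T ^ ((a+c) * (t:ℤ))) x * ((T ^ ((a+c) * (t:ℤ)))⁻¹) (1 - x) else 0) := by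
          exact Finset.sum_congr rfl fun x _ => Finset.sum_congr rfl fun y _ => key2 x y
      _ = ((p:ℂ) - 1) * jacobiSum (T ^ ((a+c)*(t:ℤ))) ((T ^ ((a+c)*(t:ℤ)))⁻¹) := by
          rw [jacobiSum, Finset.mul_sum]
          refine Finset.sum_congr rfl fun x _ => ?_
          rw [← Finset.mul_sum]
          congr 1
          simp
  have hJac : jacobiSum (T ^ ((a+c)*(t:ℤ))) ((T ^ ((a+c)*(t:ℤ)))⁻¹) = -1 := by
    rw [jacobiSum_nontrivial_inv (hnt (a+c) hac), hm1 (a+c)]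
  simp only [hgauss]
  calc ∑ e ∈ Finset.range (p - 1),
      gaussSum (T ^ (-(e:ℤ) + a * t)) ψ * gaussSum (T ^ (-(e:ℤ) + b * t)) ψ *
      gaussSum (T ^ ((e:ℤ) + c * t)) ψ * gaussSum (T ^ ((e:ℤ) - (a+b+c) * t)) ψ
      = ∑ e ∈ Finset.range (p - 1), (p:ℂ) *
          (jacobiSum (T ^ (-(e:ℤ) + a * t)) (T ^ ((e:ℤ) - (a+b+c) * t)) *
            jacobiSum (T ^ (-(e:ℤ) + b * t)) (T ^ ((e:ℤ) + c * t))) :=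
        Finset.sum_congr rfl fun e _ => key1 e
    _ = (p:ℂ) * ∑ e ∈ Finset.range (p - 1),
          jacobiSum (T ^ (-(e:ℤ) + a * t)) (T ^ ((e:ℤ) - (a+b+c) * t)) *
            jacobiSum (T ^ (-(e:ℤ) + b * t)) (T ^ ((e:ℤ) + c * t)) := by
        rw [← Finset.mul_sum]
    _ = (p:ℂ) * (((p:ℂ) - 1) * (-1)) := by rw [hQ, hJac]
    _ = -(p : ℂ) * ((p : ℂ) - 1) := by ring
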